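/- Let (τ_i) be the Thue–Morse sequence. For every n ≥ 0 and every 0 ≤ j < 2^{n+1}, the shifted word τ_{j+1}⋯τ_{2^{n+1}} satisfies (1−τ₁)(1−τ₂)⋯(1−τ_{2^{n+1}−j}) ≺ τ_{j+1}⋯τ_{2^{n+1}} ≼ τ₁τ₂⋯τ_{2^{n+1}−j} in the lexicographic order. -/

import Mathlib

private lemma tm_le (τ : ℕ → ℕ) (hτ0 : τ 0 = 0) (hτe : ∀ i, τ (2 * i) = τ i)
    (hτo : ∀ i, τ (2 * i + 1) = 1 - τ i) : ∀ i, τ i ≤ 1 := by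
  intro i
  induction i using Nat.strong_induction_on with
  | _ i ih =>
    rcases Nat.even_or_odd i with ⟨k, hk⟩ | ⟨k, hk⟩
    · rcases Nat.eq_zero_or_pos k with rfl | hk0
      · have : i = 0 := by omega
        simp [this, hτ0]
      · have h2 : i = 2 * k := by omega
        rw [h2, hτe]
        exact ih k (by omega)
    · have h2 : i = 2 * k + 1 := by omega
      rw [h2, hτo]
      omega

private lemma tm_one (τ : ℕ → ℕ) (hτ0 : τ 0 = 0)
    (hτo : ∀ i, τ (2 * i + 1) = 1 - τ i) : τ 1 = 1 := by
  have h := hτo 0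
  simp [hτ0] at h
  exact h

private lemma tm_pow (τ : ℕ → ℕ) (hτ0 : τ 0 = 0) (hτe : ∀ i, τ (2 * i) = τ i)
    (hτo : ∀ i, τ (2 * i + 1) = 1 - τ i) : ∀ k, τ (2 ^ k) = 1 := by
  intro k
  induction k with
  | zero => simpa using tm_one τ hτ0 hτo
  | succ k ih =>
    have h : (2:ℕ) ^ (k+1) = 2 * 2 ^ k := by ring
    rw [h, hτe, ih]

private lemma tm_pow_add (τ : ℕ → ℕ) (hτ0 : τ 0 = 0) (hτe : ∀ i, τ (2 * i) = τ i)
    (hτo : ∀ i, τ (2 * i + 1) = 1 - τ i) :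
    ∀ m s, s < 2 ^ m → τ (2 ^ m + s) = 1 - τ s := by
  intro m
  induction m with
  | zero =>
    intro s hs
    have : s = 0 := by omega
    subst this
    simp [hτ0, tm_one τ hτ0 hτo]
  | succ m ih =>
    have hle := tm_le τ hτ0 hτe hτo
    intro s hs
    have hpow : (2:ℕ) ^ (m+1) = 2 ^ m + 2 ^ m := by ring
    rcases Nat.even_or_odd s with ⟨u, hu⟩ | ⟨u, hu⟩
    · have e1 : 2 ^ (m+1) + s = 2 * (2 ^ m + u) := by omega
      have e2 : s = 2 * u := by omega
      rw [e1, hτe, e2, hτe]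
      exact ih u (by omega)
    · have e1 : 2 ^ (m+1) + s = 2 * (2 ^ m + u) + 1 := by omega
      have e2 : s = 2 * u + 1 := by omega
      rw [e1, hτo, e2, hτo]
      have h3 : τ (2 ^ m + u) = 1 - τ u := ih u (by omega)
      have b1 := hle u
      omega

/-- Mutual first-difference / first-agreement lemma. -/
private lemma tm_T12 (τ : ℕ → ℕ) (hτ0 : τ 0 = 0) (hτe : ∀ i, τ (2 * i) = τ i)
    (hτo : ∀ i, τ (2 * i + 1) = 1 - τ i) : ∀ x,
    (∀ p, 1 ≤ p → (∀ q, 1 ≤ q → q < p → τ (x + q) = τ q) → τ (x + p) ≠ τ p →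
      τ (x + p) = 0) ∧
    (∀ p, 1 ≤ p → (∀ q, 1 ≤ q → q < p → τ (x + q) ≠ τ q) → τ (x + p) = τ p →
      τ (x + p) = 1) := by
  have hle := tm_le τ hτ0 hτe hτo
  have h1 := tm_one τ hτ0 hτo
  have key : ∀ N a : ℕ, N = 2 * a → τ N = τ a := by
    intro N a h; rw [h, hτe]
  have keyo : ∀ N a : ℕ, N = 2 * a + 1 → τ N = 1 - τ a := by
    intro N a h; rw [h, hτo]
  have h2 : τ 2 = 1 := by
    have := key 2 1 (by omega); omega
  intro x
  induction x using Nat.strong_induction_on with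
  | _ x ih =>
    constructor
    · -- T1
      intro p hp hagree hdiff
      rcases Nat.lt_or_ge p 2 with hp2 | hp2
      · -- p = 1
        have hp1 : p = 1 := by omega
        have e2 : τ p = 1 := by rw [hp1, h1]
        have b := hle (x + p)
        omega
      · rcases Nat.eq_zero_or_pos x with rfl | hx0
        · have : (0:ℕ) + p = p := by omega
          rw [this] at hdiff
          omega
        rcases Nat.even_or_odd x with ⟨α, hα⟩ | ⟨α, hα⟩
        · -- x = 2α, α ≥ 1
          have hx : x = 2 * α := by omega
          rcases Nat.even_or_odd p with ⟨s, hsp⟩ | ⟨s, hsp⟩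
          · -- p = 2s, s ≥ 1 : use T1(α)
            have hs1 : 1 ≤ s := by omega
            have hagree' : ∀ q, 1 ≤ q → q < s → τ (α + q) = τ q := by
              intro q hq1 hq2
              have h := hagree (2*q+1) (by omega) (by omega)
              have e1 := keyo (x + (2*q+1)) (α + q) (by omega)
              have e2 := hτo q
              have b1 := hle (α + q); have b2 := hle q
              omega
            have hdiff' : τ (α + s) ≠ τ s := by
              have e3 := key (x + p) (α + s) (by omega)
              have e4 := key p s (by omega)
              omega
            have hres := (ih α (by omega)).1 s hs1 hagree' hdiff'
            have e3 := key (x + p) (α + s) (by omega)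
            omega
          · -- p = 2s+1, s ≥ 1 : contradiction
            have hs1 : 1 ≤ s := by omega
            have h := hagree (2*s) (by omega) (by omega)
            have e5 := key (x + 2*s) (α + s) (by omega)
            have e6 := key (2*s) s (by omega)
            have e3 := keyo (x + p) (α + s) (by omega)
            have e4 := keyo p s (by omega)
            have b1 := hle (α + s); have b2 := hle s
            omega
        · -- x = 2α+1
          have hx : x = 2 * α + 1 := by omega
          rcases Nat.even_or_odd p with ⟨s, hsp⟩ | ⟨s, hsp⟩
          · -- p = 2s, s ≥ 1 : use T2(α)
            have hs1 : 1 ≤ s := by omega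
            have hdis' : ∀ q, 1 ≤ q → q < s → τ (α + q) ≠ τ q := by
              intro q hq1 hq2
              have h := hagree (2*q) (by omega) (by omega)
              have e1 := keyo (x + 2*q) (α + q) (by omega)
              have e2 := key (2*q) q (by omega)
              have b1 := hle (α + q); have b2 := hle q
              omega
            have heq' : τ (α + s) = τ s := by
              have e3 := keyo (x + p) (α + s) (by omega)
              have e4 := key p s (by omega)
              have b1 := hle (α + s); have b2 := hle s
              omega
            have hne' : τ (α + s) ≠ τ s → False := fun h => h heq'
            have hres := (ih α (by omega)).2 s hs1 hdis' heq'
            have e3 := keyo (x + p) (α + s) (by omega)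
            omega
          · -- p = 2s+1, s ≥ 1 : contradiction via q=1, q=2
            have hs1 : 1 ≤ s := by omega
            have ha1 := hagree 1 (by omega) (by omega)
            have e1 := key (x + 1) (α + 1) (by omega)
            have ha2 := hagree 2 (by omega) (by omega)
            have e2 := keyo (x + 2) (α + 1) (by omega)
            have b1 := hle (α + 1)
            omega
    · -- T2
      intro p hp hdis heq
      rcases Nat.lt_or_ge p 2 with hp2 | hp2
      · have hp1 : p = 1 := by omega
        have e2 : τ p = 1 := by rw [hp1, h1]
        omega
      · rcases Nat.eq_zero_or_pos x with rfl | hx0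
        · have h := hdis 1 (by omega) (by omega)
          have : (0:ℕ) + 1 = 1 := by omega
          rw [this] at h
          omega
        rcases Nat.even_or_odd x with ⟨α, hα⟩ | ⟨α, hα⟩
        · -- x = 2α, α ≥ 1
          have hx : x = 2 * α := by omega
          rcases Nat.even_or_odd p with ⟨s, hsp⟩ | ⟨s, hsp⟩
          · -- p = 2s : use T2(α)
            have hs1 : 1 ≤ s := by omega
            have hdis' : ∀ q, 1 ≤ q → q < s → τ (α + q) ≠ τ q := by
              intro q hq1 hq2
              have h := hdis (2*q+1) (by omega) (by omega)
              have e1 := keyo (x + (2*q+1)) (α + q) (by omega)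
              have e2 := hτo q
              have b1 := hle (α + q); have b2 := hle q
              omega
            have heq' : τ (α + s) = τ s := by
              have e3 := key (x + p) (α + s) (by omega)
              have e4 := key p s (by omega)
              omega
            have hres := (ih α (by omega)).2 s hs1 hdis' heq'
            have e3 := key (x + p) (α + s) (by omega)
            omega
          · -- p = 2s+1, s ≥ 1 : contradiction
            have hs1 : 1 ≤ s := by omega
            have h := hdis (2*s) (by omega) (by omega)
            have e5 := key (x + 2*s) (α + s) (by omega)
            have e6 := key (2*s) s (by omega)
            have e3 := keyo (x + p) (α + s) (by omega)
            have e4 := keyo p s (by omega)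
            have b1 := hle (α + s); have b2 := hle s
            omega
        · -- x = 2α+1
          have hx : x = 2 * α + 1 := by omega
          rcases Nat.even_or_odd p with ⟨s, hsp⟩ | ⟨s, hsp⟩
          · -- p = 2s : use T1(α)
            have hs1 : 1 ≤ s := by omega
            have hagree' : ∀ q, 1 ≤ q → q < s → τ (α + q) = τ q := by
              intro q hq1 hq2
              have h := hdis (2*q) (by omega) (by omega)
              have e1 := keyo (x + 2*q) (α + q) (by omega)
              have e2 := key (2*q) q (by omega)
              have b1 := hle (α + q); have b2 := hle q
              omega
            have hdiff' : τ (α + s) ≠ τ s := by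
              have e3 := keyo (x + p) (α + s) (by omega)
              have e4 := key p s (by omega)
              have b1 := hle (α + s); have b2 := hle s
              omega
            have hres := (ih α (by omega)).1 s hs1 hagree' hdiff'
            have e3 := keyo (x + p) (α + s) (by omega)
            omega
          · -- p = 2s+1, s ≥ 1 : contradiction via q=1,2
            have hs1 : 1 ≤ s := by omega
            have hd1 := hdis 1 (by omega) (by omega)
            have e1 := key (x + 1) (α + 1) (by omega)
            have hd2 := hdis 2 (by omega) (by omega)
            have e2 := keyo (x + 2) (α + 1) (by omega)
            have b1 := hle (α + 1)
            omega

/-- Mutual agreement/disagreement existence with window bounds. -/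
private lemma tm_ADstar (τ : ℕ → ℕ) (hτ0 : τ 0 = 0) (hτe : ∀ i, τ (2 * i) = τ i)
    (hτo : ∀ i, τ (2 * i + 1) = 1 - τ i) : ∀ m : ℕ,
    (∀ r, 1 ≤ r → r < 2 ^ m →
      (∃ p, 1 ≤ p ∧ r + p < 2 ^ m ∧ τ (r + p) = τ p) ∨ (∃ t, r + 2 ^ t = 2 ^ m)) ∧
    (∀ r, 1 ≤ r → r < 2 ^ m →
      (∃ p, 1 ≤ p ∧ r + p < 2 ^ m ∧ τ (r + p) ≠ τ p) ∨ (∃ t, r + 2 ^ t = 2 ^ m)) := by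
  have hle := tm_le τ hτ0 hτe hτo
  have hpowv := tm_pow τ hτ0 hτe hτo
  have hpa := tm_pow_add τ hτ0 hτe hτo
  have h1 := tm_one τ hτ0 hτo
  intro m
  induction m with
  | zero =>
    constructor <;> · intro r h1r h2r; omega
  | succ m ih =>
    obtain ⟨ihA, ihD⟩ := ih
    have hpow : (2:ℕ) ^ (m+1) = 2 ^ m + 2 ^ m := by ring
    have hpos : 0 < (2:ℕ) ^ m := (Nat.pow_pos (by norm_num) : 0 < (2:ℕ) ^ m)
    constructor
    · -- A**
      intro r h1r h2r
      rcases lt_trichotomy r (2 ^ m) with hlt | heq | hgt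
      · rcases ihA r h1r hlt with ⟨p, hp1, hp2, hp3⟩ | ⟨t, ht⟩
        · exact Or.inl ⟨p, hp1, by omega, hp3⟩
        · left
          refine ⟨2 ^ t, (Nat.pow_pos (by norm_num) : 0 < (2:ℕ) ^ t), by omega, ?_⟩
          have e1 : r + 2 ^ t = 2 ^ m := ht
          rw [e1, hpowv m, hpowv t]
      · exact Or.inr ⟨m, by omega⟩
      · -- r = 2^m + r'
        set r' := r - 2 ^ m with hr'def
        have hr : r = 2 ^ m + r' := by omega
        have hr1 : 1 ≤ r' := by omega
        have hr2 : r' < 2 ^ m := by omega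
        rcases ihD r' hr1 hr2 with ⟨p, hp1, hp2, hp3⟩ | ⟨t, ht⟩
        · left
          refine ⟨p, hp1, by omega, ?_⟩
          have e1 : r + p = 2 ^ m + (r' + p) := by omega
          have e2 : τ (2 ^ m + (r' + p)) = 1 - τ (r' + p) := hpa m (r' + p) hp2
          have b1 := hle (r' + p); have b2 := hle p
          rw [e1]
          omega
        · exact Or.inr ⟨t, by omega⟩
    · -- D**
      intro r h1r h2r
      rcases lt_trichotomy r (2 ^ m) with hlt | heq | hgt
      · rcases ihD r h1r hlt with ⟨p, hp1, hp2, hp3⟩ | ⟨t, ht⟩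
        · exact Or.inl ⟨p, hp1, by omega, hp3⟩
        · -- r + 2^t = 2^m, t < m; witness p = 2^(t+1)
          left
          have htm : 2 ^ t < 2 ^ m := by omega
          refine ⟨2 ^ (t+1), (Nat.pow_pos (by norm_num) : 0 < (2:ℕ) ^ (t+1)), ?_, ?_⟩
          · have : (2:ℕ) ^ (t+1) = 2 ^ t + 2 ^ t := by ring
            omega
          · have e1 : r + 2 ^ (t+1) = 2 ^ m + 2 ^ t := by
              have : (2:ℕ) ^ (t+1) = 2 ^ t + 2 ^ t := by ring
              omega
            have e2 : τ (2 ^ m + 2 ^ t) = 1 - τ (2 ^ t) := hpa m (2 ^ t) htm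
            rw [e1, e2, hpowv t, hpowv (t+1)]
            omega
      · -- r = 2^m
        rcases Nat.eq_zero_or_pos m with rfl | hm1
        · exact Or.inr ⟨0, by simpa using by omega⟩
        · left
          have h12 : 1 < 2 ^ m := by
            calc 1 < 2 ^ 1 := by norm_num
            _ ≤ 2 ^ m := Nat.pow_le_pow_right (by norm_num) hm1
          refine ⟨1, le_refl 1, by omega, ?_⟩
          have e1 : r + 1 = 2 ^ m + 1 := by omega
          have e2 : τ (2 ^ m + 1) = 1 - τ 1 := hpa m 1 h12
          rw [e1, e2, h1]
          omega
      · -- r = 2^m + r'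
        have hr1 : 1 ≤ r - 2 ^ m := by omega
        have hr2 : r - 2 ^ m < 2 ^ m := by omega
        rcases ihA (r - 2 ^ m) hr1 hr2 with ⟨p, hp1, hp2, hp3⟩ | ⟨t, ht⟩
        · left
          refine ⟨p, hp1, by omega, ?_⟩
          have e1 : r + p = 2 ^ m + (r - 2 ^ m + p) := by omega
          have e2 : τ (2 ^ m + (r - 2 ^ m + p)) = 1 - τ (r - 2 ^ m + p) :=
            hpa m (r - 2 ^ m + p) hp2
          have b1 := hle (r - 2 ^ m + p); have b2 := hle p
          rw [e1]
          omega
        · exact Or.inr ⟨t, by omega⟩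

/-- Agreement existence within closed window. -/
private lemma tm_agree_ex (τ : ℕ → ℕ) (hτ0 : τ 0 = 0) (hτe : ∀ i, τ (2 * i) = τ i)
    (hτo : ∀ i, τ (2 * i + 1) = 1 - τ i) (m r : ℕ) (h1r : 1 ≤ r) (h2r : r < 2 ^ m) :
    ∃ p, 1 ≤ p ∧ r + p ≤ 2 ^ m ∧ τ (r + p) = τ p := by
  rcases (tm_ADstar τ hτ0 hτe hτo m).1 r h1r h2r with ⟨p, hp1, hp2, hp3⟩ | ⟨t, ht⟩
  · exact ⟨p, hp1, by omega, hp3⟩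
  · refine ⟨2 ^ t, (Nat.pow_pos (by norm_num) : 0 < (2:ℕ) ^ t), by omega, ?_⟩
    have e1 : r + 2 ^ t = 2 ^ m := ht
    rw [e1, tm_pow τ hτ0 hτe hτo m, tm_pow τ hτ0 hτe hτo t]

/-- Lex from first difference, for `List.ofFn`. -/
private lemma lex_of_first : ∀ (L : ℕ) (f g : Fin L → ℕ) (k : ℕ) (hk : k < L),
    (∀ (t : ℕ) (ht : t < L), t < k → f ⟨t, ht⟩ = g ⟨t, ht⟩) →
    f ⟨k, hk⟩ < g ⟨k, hk⟩ →
    List.Lex (· < ·) (List.ofFn f) (List.ofFn g) := by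
  intro L
  induction L with
  | zero => intro f g k hk; omega
  | succ L ihL =>
    intro f g k hk ha hlt
    rw [List.ofFn_succ, List.ofFn_succ]
    cases k with
    | zero => exact List.Lex.rel hlt
    | succ k =>
      have h0 : f 0 = g 0 := ha 0 (Nat.succ_pos L) (Nat.succ_pos k)
      rw [h0]
      apply List.Lex.cons
      apply ihL (fun i => f i.succ) (fun i => g i.succ) k (by omega)
      · intro t ht htk
        exact ha (t + 1) (by omega) (by omega)
      · exact hlt

theorem thueMorse_lex (τ : ℕ → ℕ)
    (hτ0 : τ 0 = 0) (hτe : ∀ i, τ (2 * i) = τ i) (hτo : ∀ i, τ (2 * i + 1) = 1 - τ i)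
    (n j : ℕ) (hj : j < 2 ^ (n + 1)) :
    List.Lex (· < ·)
        (List.ofFn (fun t : Fin (2 ^ (n + 1) - j) => 1 - τ ((t : ℕ) + 1)))
        (List.ofFn (fun t : Fin (2 ^ (n + 1) - j) => τ (j + (t : ℕ) + 1))) ∧
      (List.Lex (· < ·)
          (List.ofFn (fun t : Fin (2 ^ (n + 1) - j) => τ (j + (t : ℕ) + 1)))
          (List.ofFn (fun t : Fin (2 ^ (n + 1) - j) => τ ((t : ℕ) + 1))) ∨
        (List.ofFn (fun t : Fin (2 ^ (n + 1) - j) => τ (j + (t : ℕ) + 1))) =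
          (List.ofFn (fun t : Fin (2 ^ (n + 1) - j) => τ ((t : ℕ) + 1)))) := by
  classical
  have hle := tm_le τ hτ0 hτe hτo
  have h1 := tm_one τ hτ0 hτo
  obtain ⟨T1x, T2x⟩ := tm_T12 τ hτ0 hτe hτo j
  have hLpos : 1 ≤ 2 ^ (n + 1) - j := by
    have : 0 < (2:ℕ) ^ (n+1) := (Nat.pow_pos (by norm_num) : 0 < (2:ℕ) ^ (n+1))
    omega
  constructor
  · -- left strict inequality
    have hex : ∃ t, τ (j + t + 1) = τ (t + 1) ∧ t < 2 ^ (n + 1) - j := by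
      rcases Nat.eq_zero_or_pos j with rfl | hj1
      · exact ⟨0, by simp, by omega⟩
      · obtain ⟨p, hp1, hp2, hp3⟩ := tm_agree_ex τ hτ0 hτe hτo (n+1) j hj1 hj
        refine ⟨p - 1, ?_, by omega⟩
        have e1 : j + (p - 1) + 1 = j + p := by omega
        have e2 : p - 1 + 1 = p := by omega
        rw [e1, e2]
        exact hp3
    have hexQ : ∃ t, τ (j + t + 1) = τ (t + 1) := ⟨hex.choose, hex.choose_spec.1⟩
    set t0 := Nat.find hexQ with ht0def
    have hQ : τ (j + t0 + 1) = τ (t0 + 1) := Nat.find_spec hexQ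
    have ht0lt : t0 < 2 ^ (n + 1) - j := by
      obtain ⟨t, htt, htlt⟩ := hex
      have : t0 ≤ t := Nat.find_le htt
      omega
    apply lex_of_first _ _ _ t0 ht0lt
    · intro t ht htk
      have hnot : ¬ τ (j + t + 1) = τ (t + 1) := Nat.find_min hexQ htk
      show 1 - τ (t + 1) = τ (j + t + 1)
      have b1 := hle (t + 1); have b2 := hle (j + t + 1)
      omega
    · show 1 - τ (t0 + 1) < τ (j + t0 + 1)
      have hv : τ (j + (t0 + 1)) = 1 := by
        apply T2x (t0 + 1) (by omega)
        · intro q hq1 hq2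
          have hnot : ¬ τ (j + (q - 1) + 1) = τ ((q - 1) + 1) :=
            Nat.find_min hexQ (by omega)
          have e1 : j + (q - 1) + 1 = j + q := by omega
          have e2 : q - 1 + 1 = q := by omega
          rw [e1, e2] at hnot
          exact hnot
        · have e1 : j + (t0 + 1) = j + t0 + 1 := by omega
          rw [e1]
          exact hQ
      have e1 : j + (t0 + 1) = j + t0 + 1 := by omega
      rw [e1] at hv
      omega
  · -- right inequality (≺ or =)
    by_cases hall : ∀ t, t < 2 ^ (n + 1) - j → τ (j + t + 1) = τ (t + 1)
    · right
      exact congrArg List.ofFn (funext fun t => hall t.1 t.2)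
    · left
      push_neg at hall
      have hexQ : ∃ t, t < 2 ^ (n + 1) - j ∧ τ (j + t + 1) ≠ τ (t + 1) := hall
      set t0 := Nat.find hexQ with ht0def
      obtain ⟨ht0lt, ht0ne⟩ : t0 < 2 ^ (n + 1) - j ∧ τ (j + t0 + 1) ≠ τ (t0 + 1) :=
        Nat.find_spec hexQ
      have hagree : ∀ t, t < t0 → τ (j + t + 1) = τ (t + 1) := by
        intro t htk
        have hnot := Nat.find_min hexQ htk
        by_contra hne
        exact hnot ⟨by omega, hne⟩
      apply lex_of_first _ _ _ t0 ht0lt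
      · intro t ht htk
        exact hagree t htk
      · show τ (j + t0 + 1) < τ (t0 + 1)
        have hv : τ (j + (t0 + 1)) = 0 := by
          apply T1x (t0 + 1) (by omega)
          · intro q hq1 hq2
            have h := hagree (q - 1) (by omega)
            have e1 : j + (q - 1) + 1 = j + q := by omega
            have e2 : q - 1 + 1 = q := by omega
            rw [e1, e2] at h
            exact h
          · have e1 : j + (t0 + 1) = j + t0 + 1 := by omega
            rw [e1]
            exact ht0ne
        have e1 : j + (t0 + 1) = j + t0 + 1 := by omega
        rw [e1] at hv
        have b := hle (t0 + 1)
        omega
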